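/- With Ω, T, p, q as above, for every input x and every 1 ≤ t ≤ T: A_t(x) ≤ 2 Σ_{k=1}^{t−1} E_k(x) + E_t(x), where A_t(x) = E_{y∼p_{≤T}(·|x)}[ 1{t ≤ |y|} · D_TVD(p(·|x,y_{<t}), q(·|x,y_{<t})) ] and E_k(x) = E_{y∼q_{≤T}(·|x)}[ 1{k ≤ |y|} · D_TVD(p(·|x,y_{<k}), q(·|x,y_{<k})) ]. -/

import Mathlib

open Finset

/-- Total variation distance between two distributions on a finite set. -/
noncomputable def tvd {Ω : Type*} [Fintype Ω] (P Q : Ω → ℝ) : ℝ :=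
  (1 / 2) * ∑ c, |P c - Q c|

/-- `IsDist P`: `P` is a probability distribution on the finite set `Ω`. -/
def IsDist {Ω : Type*} [Fintype Ω] (P : Ω → ℝ) : Prop :=
  (∀ c, 0 ≤ P c) ∧ ∑ c, P c = 1

/-- A next-token model: for every input `x` and every prefix, a next-token distribution. -/
def IsModel {Ω ι : Type*} [Fintype Ω] (p : ι → List Ω → Ω → ℝ) : Prop :=
  ∀ x pre, IsDist (p x pre)

/-- `Stopped eos T y`: `y` is a completed output sequence for horizon `T`: it is nonempty,
has length at most `T`, contains the end-of-sequence token at no position except possibly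
the last one, and either ends with `eos` or has length exactly `T`. -/
def Stopped {Ω : Type*} [DecidableEq Ω] (eos : Ω) (T : ℕ) (y : List Ω) : Prop :=
  y ≠ [] ∧ y.length ≤ T ∧ eos ∉ y.dropLast ∧ (y.getLast? = some eos ∨ y.length = T)

open Classical in
/-- Probability that autoregressive sampling — where the next-token distribution used to
sample the `(t+1)`-st token given the length-`t` prefix `pre` is `ms t pre`, with horizon `T`
and end-of-sequence token `eos` — outputs exactly the sequence `y`. -/
noncomputable def seqProb {Ω : Type*} [Fintype Ω] [DecidableEq Ω] (eos : Ω)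
    (ms : ℕ → List Ω → Ω → ℝ) (T : ℕ) (y : List Ω) : ℝ :=
  if Stopped eos T y then ∏ t ∈ Finset.range y.length, ms t (y.take t) (y.getD t eos) else 0

/-- Expectation of `f` under the induced distribution over output sequences. -/
noncomputable def seqExp {Ω : Type*} [Fintype Ω] [DecidableEq Ω] (eos : Ω)
    (ms : ℕ → List Ω → Ω → ℝ) (T : ℕ) (f : List Ω → ℝ) : ℝ :=
  ∑ n ∈ Finset.Icc 1 T, ∑ v : Fin n → Ω, seqProb eos ms T (List.ofFn v) * f (List.ofFn v)

/-- Expectation under `p_{≤T}(·|x)`, the output-sequence distribution of the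
autoregressive model with next-token distributions `p`. -/
noncomputable def modelExp {Ω ι : Type*} [Fintype Ω] [DecidableEq Ω] (eos : Ω)
    (p : ι → List Ω → Ω → ℝ) (x : ι) (T : ℕ) (f : List Ω → ℝ) : ℝ :=
  seqExp eos (fun _ pre => p x pre) T f

/-- Expectation under the mixed-model sequence distribution `M(x, ∅, z)`, where the letter
`z_t` (`true` = letter `P`, i.e. target model `p`; `false` = letter `Q`, i.e. draft model `q`)
selects the model used to sample the `t`-th token, with horizon `|z|` and empty prefix. -/
noncomputable def mixExp {Ω ι : Type*} [Fintype Ω] [DecidableEq Ω] (eos : Ω)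
    (p q : ι → List Ω → Ω → ℝ) (x : ι) (z : List Bool) (f : List Ω → ℝ) : ℝ :=
  seqExp eos (fun t pre => if z.getD t true then p x pre else q x pre) z.length f

/-- `Σ_{t=1}^{|y|} D_TVD(p(·|x, y_{<t}), q(·|x, y_{<t}))`. -/
noncomputable def totalLoss {Ω ι : Type*} [Fintype Ω] (p q : ι → List Ω → Ω → ℝ)
    (x : ι) (y : List Ω) : ℝ :=
  ∑ t ∈ Finset.range y.length, tvd (p x (y.take t)) (q x (y.take t))

/-- `1{t ≤ |y|} · D_TVD(p(·|x, y_{<t}), q(·|x, y_{<t}))` for a (1-indexed) position `t`. -/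
noncomputable def stepLoss {Ω ι : Type*} [Fintype Ω] (p q : ι → List Ω → Ω → ℝ)
    (x : ι) (t : ℕ) (y : List Ω) : ℝ :=
  if t ≤ y.length then tvd (p x (y.take (t - 1))) (q x (y.take (t - 1))) else 0

/-- Expected output length `L_p(x) = E_{y∼p_{≤T}(·|x)}[|y|]` of the target model. -/
noncomputable def Lp {Ω ι : Type*} [Fintype Ω] [DecidableEq Ω] (eos : Ω)
    (p : ι → List Ω → Ω → ℝ) (x : ι) (T : ℕ) : ℝ :=
  modelExp eos p x T (fun y => (y.length : ℝ))

/-- Sequence-level acceptance rate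
`α(x) = 1 − E_{y∼p_{≤T}(·|x)}[Σ_{t=1}^{|y|} D_TVD(p(·|x,y_{<t}), q(·|x,y_{<t}))] / L_p(x)`. -/
noncomputable def acceptRate {Ω ι : Type*} [Fintype Ω] [DecidableEq Ω] (eos : Ω)
    (p q : ι → List Ω → Ω → ℝ) (x : ι) (T : ℕ) : ℝ :=
  1 - modelExp eos p x T (totalLoss p q x) / Lp eos p x T

/-- On-policy distillation loss
`ε(x) = E_{y∼q_{≤T}(·|x)}[(1/|y|) Σ_{t=1}^{|y|} D_TVD(p(·|x,y_{<t}), q(·|x,y_{<t}))]`. -/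
noncomputable def onPolicyLoss {Ω ι : Type*} [Fintype Ω] [DecidableEq Ω] (eos : Ω)
    (p q : ι → List Ω → Ω → ℝ) (x : ι) (T : ℕ) : ℝ :=
  modelExp eos q x T (fun y => (1 / (y.length : ℝ)) * totalLoss p q x y)

/-- `A_t(x) = E_{y∼p_{≤T}(·|x)}[1{t ≤ |y|} · D_TVD(p(·|x,y_{<t}), q(·|x,y_{<t}))]`. -/
noncomputable def Aterm {Ω ι : Type*} [Fintype Ω] [DecidableEq Ω] (eos : Ω)
    (p q : ι → List Ω → Ω → ℝ) (x : ι) (T t : ℕ) : ℝ :=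
  modelExp eos p x T (stepLoss p q x t)

/-- `E_t(x) = E_{y∼q_{≤T}(·|x)}[1{t ≤ |y|} · D_TVD(p(·|x,y_{<t}), q(·|x,y_{<t}))]`. -/
noncomputable def Eterm {Ω ι : Type*} [Fintype Ω] [DecidableEq Ω] (eos : Ω)
    (p q : ι → List Ω → Ω → ℝ) (x : ι) (T t : ℕ) : ℝ :=
  modelExp eos q x T (stepLoss p q x t)

set_option linter.unusedSectionVars false
section Aux

open Classical

variable {Ω : Type*} [Fintype Ω] [DecidableEq Ω]

/-- Probability of a prefix: product of next-token probabilities. -/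
noncomputable def prefProb (eos : Ω) (ms : ℕ → List Ω → Ω → ℝ) (w : List Ω) : ℝ :=
  ∏ s ∈ Finset.range w.length, ms s (w.take s) (w.getD s eos)

/-- Total mass of stopped sequences extending the prefix `w`. -/
noncomputable def contMass (eos : Ω) (ms : ℕ → List Ω → Ω → ℝ) (T : ℕ) (w : List Ω) : ℝ :=
  ∑ n ∈ Finset.Icc 1 T, ∑ v : Fin n → Ω,
    if (List.ofFn v).take w.length = w then seqProb eos ms T (List.ofFn v) else 0

lemma prefProb_nil (eos : Ω) (ms : ℕ → List Ω → Ω → ℝ) : prefProb eos ms [] = 1 := by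
  simp [prefProb]

lemma prefProb_nonneg (eos : Ω) {ms : ℕ → List Ω → Ω → ℝ}
    (h : ∀ t pre, IsDist (ms t pre)) (w : List Ω) : 0 ≤ prefProb eos ms w :=
  Finset.prod_nonneg fun s _ => (h s _).1 _

lemma prefProb_append (eos : Ω) (ms : ℕ → List Ω → Ω → ℝ) (w : List Ω) (c : Ω) :
    prefProb eos ms (w ++ [c]) = prefProb eos ms w * ms w.length w c := by
  unfold prefProb
  rw [List.length_append, List.length_singleton, Finset.prod_range_succ]
  congr 1
  · exact Finset.prod_congr rfl fun s hs => by
      rw [Finset.mem_range] at hs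
      rw [List.take_append_of_le_length hs.le, List.getD_append _ _ _ _ hs]
  · rw [List.take_append_of_le_length le_rfl, List.take_length]
    congr 1
    simp [List.getD_append_right]

lemma seqProb_stopped (eos : Ω) (ms : ℕ → List Ω → Ω → ℝ) (T : ℕ) {y : List Ω}
    (h : Stopped eos T y) : seqProb eos ms T y = prefProb eos ms y := by
  rw [seqProb, if_pos h]; rfl

lemma seqProb_not_stopped (eos : Ω) (ms : ℕ → List Ω → Ω → ℝ) (T : ℕ) {y : List Ω}
    (h : ¬ Stopped eos T y) : seqProb eos ms T y = 0 := by
  rw [seqProb, if_neg h]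

lemma eos_mem_of_getLast? {eos : Ω} {y : List Ω} (h : y.getLast? = some eos) : eos ∈ y := by
  obtain ⟨h1, h2⟩ := List.mem_getLast?_eq_getLast (x := eos) (l := y) h
  rw [h2]; exact List.getLast_mem h1

lemma not_stopped_of_eosfree {eos : Ω} {T : ℕ} {w : List Ω} (hw : eos ∉ w)
    (hlt : w.length < T) : ¬ Stopped eos T w := by
  rintro ⟨-, -, -, hc | hc⟩
  · exact hw (eos_mem_of_getLast? hc)
  · omega

lemma stopped_concat_eos {eos : Ω} {T : ℕ} {w : List Ω} (hw : eos ∉ w)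
    (hlen : w.length + 1 ≤ T) : Stopped eos T (w ++ [eos]) := by
  refine ⟨by simp, by simpa using hlen, ?_, Or.inl List.getLast?_concat⟩
  rwa [List.dropLast_concat]

lemma stopped_full {eos : Ω} {T : ℕ} {w : List Ω} (hT : 1 ≤ T) (hw : eos ∉ w)
    (hlen : w.length = T) : Stopped eos T w := by
  refine ⟨?_, hlen.le, fun hmem => hw (List.dropLast_subset _ hmem), Or.inr hlen⟩
  intro h; rw [h] at hlen; simp at hlen; omega

lemma sum_ofFn_ite {m : ℕ} (w : List Ω) (g : List Ω → ℝ) :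
    (∑ u : Fin m → Ω, if w = List.ofFn u then g (List.ofFn u) else 0)
      = if w.length = m then g w else 0 := by
  by_cases h : w.length = m
  · subst h
    rw [if_pos rfl, Finset.sum_eq_single (fun i : Fin w.length => w.get i)]
    · rw [if_pos (List.ofFn_get w).symm, List.ofFn_get]
    · intro u _ hne
      rw [if_neg]
      intro hu
      exact hne (List.ofFn_injective (hu.symm.trans (List.ofFn_get w).symm))
    · intro h; exact absurd (Finset.mem_univ _) h
  · rw [if_neg h]
    refine Finset.sum_eq_zero fun u _ => ?_
    rw [if_neg]
    intro hu
    exact h (by rw [hu, List.length_ofFn])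

set_option maxHeartbeats 1000000

lemma contMass_full {eos : Ω} {ms : ℕ → List Ω → Ω → ℝ} {T : ℕ} (hT : 1 ≤ T)
    {w : List Ω} (hw : w.length = T) :
    contMass eos ms T w = seqProb eos ms T w := by
  unfold contMass
  have hstep : ∀ n ∈ Finset.Icc 1 T,
      (∑ v : Fin n → Ω, if (List.ofFn v).take w.length = w
          then seqProb eos ms T (List.ofFn v) else 0)
        = if n = T then seqProb eos ms T w else 0 := by
    intro n hn
    rw [Finset.mem_Icc] at hn
    have : ∀ v : Fin n → Ω,
        (if (List.ofFn v).take w.length = w then seqProb eos ms T (List.ofFn v) else 0)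
          = if w = List.ofFn v then seqProb eos ms T (List.ofFn v) else 0 := by
      intro v
      rw [hw, List.take_of_length_le (by rw [List.length_ofFn]; exact hn.2)]
      by_cases h : List.ofFn v = w
      · rw [if_pos h, if_pos h.symm]
      · rw [if_neg h, if_neg (Ne.symm h)]
    rw [Finset.sum_congr rfl fun v _ => this v, sum_ofFn_ite w (seqProb eos ms T), hw]
    by_cases h : n = T
    · rw [if_pos h.symm, if_pos h]
    · rw [if_neg (Ne.symm h), if_neg h]
  rw [Finset.sum_congr rfl hstep, Finset.sum_ite_eq' (Finset.Icc 1 T) T,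
    if_pos (Finset.mem_Icc.2 ⟨hT, le_rfl⟩)]

lemma contMass_concat_eos {eos : Ω} {ms : ℕ → List Ω → Ω → ℝ} {T : ℕ}
    {w : List Ω} (hw : eos ∉ w) (hlen : w.length + 1 ≤ T) :
    contMass eos ms T (w ++ [eos]) = seqProb eos ms T (w ++ [eos]) := by
  unfold contMass
  have hlw : (w ++ [eos]).length = w.length + 1 := by simp
  have hstep : ∀ n ∈ Finset.Icc 1 T,
      (∑ v : Fin n → Ω, if (List.ofFn v).take (w ++ [eos]).length = w ++ [eos]
          then seqProb eos ms T (List.ofFn v) else 0)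
        = if n = w.length + 1 then seqProb eos ms T (w ++ [eos]) else 0 := by
    intro n hn
    rw [Finset.mem_Icc] at hn
    by_cases hc : n ≤ w.length + 1
    · have : ∀ v : Fin n → Ω,
          (if (List.ofFn v).take (w ++ [eos]).length = w ++ [eos]
            then seqProb eos ms T (List.ofFn v) else 0)
            = if w ++ [eos] = List.ofFn v then seqProb eos ms T (List.ofFn v) else 0 := by
        intro v
        rw [hlw, List.take_of_length_le (by rw [List.length_ofFn]; exact hc)]
        by_cases h : List.ofFn v = w ++ [eos]
        · rw [if_pos h, if_pos h.symm]
        · rw [if_neg h, if_neg (Ne.symm h)]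
      rw [Finset.sum_congr rfl fun v _ => this v, sum_ofFn_ite (w ++ [eos]) (seqProb eos ms T), hlw]
      by_cases h : n = w.length + 1
      · rw [if_pos h.symm, if_pos h]
      · rw [if_neg (Ne.symm h), if_neg h]
    · push_neg at hc
      rw [if_neg (by omega)]
      refine Finset.sum_eq_zero fun v _ => ?_
      by_cases h : (List.ofFn v).take (w ++ [eos]).length = w ++ [eos]
      · rw [if_pos h]
        refine seqProb_not_stopped eos ms T fun hs => ?_
        apply hs.2.2.1
        have hmem : eos ∈ (List.ofFn v).take (w.length + 1) := by
          rw [← hlw, h]; simp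
        rw [List.dropLast_eq_take, List.length_ofFn]
        have h3 : (List.ofFn v).take (w.length + 1)
            = ((List.ofFn v).take (n - 1)).take (w.length + 1) := by
          rw [List.take_take, inf_eq_left.2 (by omega)]
        rw [h3] at hmem
        exact List.take_subset _ _ hmem
      · rw [if_neg h]
  rw [Finset.sum_congr rfl hstep, Finset.sum_ite_eq' (Finset.Icc 1 T) (w.length + 1),
    if_pos (Finset.mem_Icc.2 ⟨by omega, hlen⟩)]

lemma contMass_step {eos : Ω} {ms : ℕ → List Ω → Ω → ℝ} {T : ℕ}
    {w : List Ω} (hw : eos ∉ w) (hlt : w.length < T) :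
    contMass eos ms T w = ∑ c : Ω, contMass eos ms T (w ++ [c]) := by
  unfold contMass
  rw [Finset.sum_comm]
  refine Finset.sum_congr rfl fun n hn => ?_
  rw [Finset.sum_comm]
  refine Finset.sum_congr rfl fun v _ => ?_
  rw [Finset.mem_Icc] at hn
  set y := List.ofFn v with hy
  have hylen : y.length = n := List.length_ofFn
  have hlw : ∀ c : Ω, (w ++ [c]).length = w.length + 1 := fun c => by simp
  by_cases hj : y.take w.length = w
  · by_cases hcase : w.length < n
    · have hgoal : y.take (w.length + 1) = w ++ [y.getD w.length eos] := by
        rw [List.take_succ, hj]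
        congr 1
        rw [List.getElem?_eq_getElem (by omega), List.getD_eq_getElem _ _ (by omega)]
        rfl
      rw [if_pos hj, Finset.sum_eq_single (y.getD w.length eos)]
      · rw [hlw, if_pos hgoal]
      · intro c _ hc
        rw [hlw, if_neg]
        intro h
        have h4 := List.append_cancel_left (hgoal.symm.trans h)
        simp only [List.cons.injEq, and_true] at h4
        exact hc h4.symm
      · intro h; exact absurd (Finset.mem_univ _) h
    · push_neg at hcase
      have hyw : y = w := by
        rw [← hj, List.take_of_length_le (by omega)]
      have h0 : seqProb eos ms T y = 0 := by
        rw [hyw]; exact seqProb_not_stopped _ _ _ (not_stopped_of_eosfree hw hlt)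
      rw [if_pos hj, h0]
      symm
      refine Finset.sum_eq_zero fun c _ => ?_
      rw [hlw, if_neg, ]
      intro h
      have := congrArg List.length h
      rw [List.length_take, hylen] at this
      simp at this
      omega
  · rw [if_neg hj]
    symm
    refine Finset.sum_eq_zero fun c _ => ?_
    rw [hlw, if_neg]
    intro h
    apply hj
    have h2 : (y.take (w.length + 1)).take w.length = (w ++ [c]).take w.length := by rw [h]
    rw [List.take_take, inf_eq_left.2 (by omega),
      List.take_append_of_le_length le_rfl, List.take_length] at h2
    exact h2

lemma contMass_eq_prefProb {eos : Ω} {ms : ℕ → List Ω → Ω → ℝ} {T : ℕ}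
    (hms : ∀ t pre, IsDist (ms t pre)) (hT : 1 ≤ T) :
    ∀ w : List Ω, eos ∉ w → w.length ≤ T → contMass eos ms T w = prefProb eos ms w := by
  suffices h : ∀ d : ℕ, ∀ w : List Ω, eos ∉ w → w.length ≤ T → T - w.length ≤ d →
      contMass eos ms T w = prefProb eos ms w by
    intro w hw hle
    exact h (T - w.length) w hw hle le_rfl
  intro d
  induction d with
  | zero =>
    intro w hw hle hd
    have hfull : w.length = T := by omega
    rw [contMass_full hT hfull, seqProb_stopped eos ms T (stopped_full hT hw hfull)]
  | succ d ih =>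
    intro w hw hle hd
    rcases eq_or_lt_of_le hle with hfull | hlt
    · rw [contMass_full hT hfull, seqProb_stopped eos ms T (stopped_full hT hw hfull)]
    · rw [contMass_step hw hlt,
        Fintype.sum_eq_add_sum_compl eos (fun c => contMass eos ms T (w ++ [c]))]
      have h1 : contMass eos ms T (w ++ [eos]) = prefProb eos ms w * ms w.length w eos := by
        rw [contMass_concat_eos hw (by omega),
          seqProb_stopped eos ms T (stopped_concat_eos hw (by omega)), prefProb_append]
      have h2 : ∀ c ∈ ({eos}ᶜ : Finset Ω), contMass eos ms T (w ++ [c])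
          = prefProb eos ms w * ms w.length w c := by
        intro c hc
        rw [Finset.mem_compl, Finset.mem_singleton] at hc
        rw [ih (w ++ [c]) (by simp [hw, Ne.symm hc]) (by simp; omega) (by simp; omega),
          prefProb_append]
      rw [h1, Finset.sum_congr rfl h2, ← Finset.mul_sum, ← mul_add,
        ← Fintype.sum_eq_add_sum_compl eos (fun c => ms w.length w c),
        (hms w.length w).2, mul_one]
lemma step_pointwise {eos : Ω} {ms : ℕ → List Ω → Ω → ℝ} {T : ℕ}
    {t : ℕ} (ht1 : 1 ≤ t) (ht2 : t ≤ T) (y : List Ω) (F : List Ω → ℝ) :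
    (if (y.take (t-1)).length = t-1 then
        (if eos ∉ y.take (t-1) then seqProb eos ms T y * F (y.take (t-1)) else 0) else 0)
      = seqProb eos ms T y * (if t ≤ y.length then F (y.take (t-1)) else 0) := by
  by_cases hstop : Stopped eos T y
  · by_cases hn : t ≤ y.length
    · have hlen : (y.take (t-1)).length = t-1 := by
        rw [List.length_take]; omega
      have hfree : eos ∉ y.take (t-1) := by
        intro hmem
        apply hstop.2.2.1
        rw [List.dropLast_eq_take]
        have h3 : y.take (t-1) = (y.take (y.length - 1)).take (t-1) := by
          rw [List.take_take, inf_eq_left.2 (by omega)]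
        rw [h3] at hmem
        exact List.take_subset _ _ hmem
      rw [if_pos hlen, if_pos hfree, if_pos hn]
    · push_neg at hn
      rw [if_neg (show ¬ t ≤ y.length by omega), mul_zero]
      by_cases hl : (y.take (t-1)).length = t-1
      · rw [if_pos hl, if_neg]
        rw [List.length_take] at hl
        have hyl : y.length = t - 1 := by omega
        rw [List.take_of_length_le (by omega)]
        intro hnm
        rcases hstop.2.2.2 with hc | hc
        · exact hnm (eos_mem_of_getLast? hc)
        · omega
      · rw [if_neg hl]
  · rw [seqProb_not_stopped eos ms T hstop, zero_mul, zero_mul]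
    split_ifs <;> rfl

lemma seqExp_stepLoss {eos : Ω} {ms : ℕ → List Ω → Ω → ℝ} {T : ℕ}
    (hms : ∀ s pre, IsDist (ms s pre)) (hT : 1 ≤ T)
    (F : List Ω → ℝ) {t : ℕ} (ht1 : 1 ≤ t) (ht2 : t ≤ T) :
    seqExp eos ms T (fun y => if t ≤ y.length then F (y.take (t-1)) else 0)
      = ∑ u : Fin (t-1) → Ω, if eos ∉ List.ofFn u
          then prefProb eos ms (List.ofFn u) * F (List.ofFn u) else 0 := by
  symm
  have step1 : ∀ u : Fin (t-1) → Ω,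
      (if eos ∉ List.ofFn u then prefProb eos ms (List.ofFn u) * F (List.ofFn u) else 0)
        = ∑ n ∈ Finset.Icc 1 T, ∑ v : Fin n → Ω,
            if (List.ofFn v).take (t-1) = List.ofFn u then
              (if eos ∉ List.ofFn u then
                seqProb eos ms T (List.ofFn v) * F (List.ofFn u) else 0) else 0 := by
    intro u
    by_cases hu : eos ∉ List.ofFn u
    · rw [if_pos hu, ← contMass_eq_prefProb hms hT _ hu (by rw [List.length_ofFn]; omega),
        contMass, List.length_ofFn, Finset.sum_mul]
      refine Finset.sum_congr rfl fun n _ => ?_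
      rw [Finset.sum_mul]
      refine Finset.sum_congr rfl fun v _ => ?_
      by_cases h : (List.ofFn v).take (t-1) = List.ofFn u
      · rw [if_pos h, if_pos h, if_pos hu]
      · rw [if_neg h, if_neg h, zero_mul]
    · rw [if_neg hu]
      symm
      refine Finset.sum_eq_zero fun n _ => Finset.sum_eq_zero fun v _ => ?_
      rw [if_neg hu, ite_self]
  rw [Finset.sum_congr rfl fun u _ => step1 u, Finset.sum_comm]
  refine Finset.sum_congr rfl fun n hn => ?_
  rw [Finset.sum_comm]
  refine Finset.sum_congr rfl fun v _ => ?_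
  have inner : ∀ u : Fin (t-1) → Ω,
      (if (List.ofFn v).take (t-1) = List.ofFn u then
        (if eos ∉ List.ofFn u then seqProb eos ms T (List.ofFn v) * F (List.ofFn u) else 0) else 0)
      = (if (List.ofFn v).take (t-1) = List.ofFn u then
          (fun w => if eos ∉ w then seqProb eos ms T (List.ofFn v) * F w else 0) (List.ofFn u)
          else 0) := fun u => rfl
  refine ((Finset.sum_congr rfl fun u _ => inner u).trans
    (sum_ofFn_ite ((List.ofFn v).take (t-1))
      (fun w => if eos ∉ w then seqProb eos ms T (List.ofFn v) * F w else 0))).trans ?_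
  exact step_pointwise ht1 ht2 (List.ofFn v) F
lemma tvd_nonneg (P Q : Ω → ℝ) : 0 ≤ tvd P Q :=
  mul_nonneg (by norm_num) (Finset.sum_nonneg fun c _ => abs_nonneg _)

lemma tvd_le_one {P Q : Ω → ℝ} (hP : IsDist P) (hQ : IsDist Q) : tvd P Q ≤ 1 := by
  have h : ∑ c, |P c - Q c| ≤ 2 := by
    calc ∑ c, |P c - Q c| ≤ ∑ c, (P c + Q c) := by
          refine Finset.sum_le_sum fun c _ => ?_
          calc |P c - Q c| ≤ |P c| + |Q c| := abs_sub _ _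
          _ = P c + Q c := by rw [abs_of_nonneg (hP.1 c), abs_of_nonneg (hQ.1 c)]
    _ = 2 := by rw [Finset.sum_add_distrib, hP.2, hQ.2]; norm_num
  unfold tvd; linarith

lemma sum_abs_eq_two_tvd (P Q : Ω → ℝ) : ∑ c, |P c - Q c| = 2 * tvd P Q := by
  unfold tvd; ring

lemma ofFn_snoc {j : ℕ} (v : Fin j → Ω) (c : Ω) :
    List.ofFn (Fin.snoc v c : Fin (j+1) → Ω) = List.ofFn v ++ [c] := by
  rw [List.ofFn_succ']
  simp [Fin.snoc_castSucc, Fin.snoc_last, List.concat_eq_append]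

lemma telescope (eos : Ω) (p q : List Ω → Ω → ℝ)
    (hp : ∀ pre, IsDist (p pre)) (hq : ∀ pre, IsDist (q pre)) (j : ℕ) :
    (∑ u : Fin j → Ω, if eos ∉ List.ofFn u then
        |prefProb eos (fun _ => p) (List.ofFn u) - prefProb eos (fun _ => q) (List.ofFn u)|
      else 0)
      ≤ 2 * ∑ k ∈ Finset.Icc 1 j, ∑ u : Fin (k-1) → Ω, if eos ∉ List.ofFn u then
          prefProb eos (fun _ => q) (List.ofFn u) * tvd (p (List.ofFn u)) (q (List.ofFn u))
        else 0 := by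
  induction j with
  | zero => simp [prefProb_nil]
  | succ j ih =>
    set PP := prefProb eos (fun _ => p) with hPP
    set QQ := prefProb eos (fun _ => q) with hQQ
    have reindex : (∑ u : Fin (j+1) → Ω, if eos ∉ List.ofFn u then
          |PP (List.ofFn u) - QQ (List.ofFn u)| else 0)
        = ∑ z : Ω × (Fin j → Ω), if eos ∉ List.ofFn z.2 ++ [z.1] then
            |PP (List.ofFn z.2 ++ [z.1]) - QQ (List.ofFn z.2 ++ [z.1])| else 0 := by
      refine (Fintype.sum_equiv (Fin.snocEquiv (fun _ : Fin (j+1) => Ω))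
        (fun z => if eos ∉ List.ofFn z.2 ++ [z.1] then
            |PP (List.ofFn z.2 ++ [z.1]) - QQ (List.ofFn z.2 ++ [z.1])| else 0)
        (fun u => if eos ∉ List.ofFn u then |PP (List.ofFn u) - QQ (List.ofFn u)| else 0)
        (fun z => ?_)).symm
      have he : ((Fin.snocEquiv (fun _ : Fin (j+1) => Ω)) z) = Fin.snoc z.2 z.1 := rfl
      simp only [he, ofFn_snoc]
    rw [reindex, Fintype.sum_prod_type, Finset.sum_comm]
    have key : ∀ v : Fin j → Ω,
        (∑ c : Ω, if eos ∉ List.ofFn v ++ [c] then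
            |PP (List.ofFn v ++ [c]) - QQ (List.ofFn v ++ [c])| else 0)
        ≤ (if eos ∉ List.ofFn v then |PP (List.ofFn v) - QQ (List.ofFn v)| else 0)
          + 2 * (if eos ∉ List.ofFn v then
              QQ (List.ofFn v) * tvd (p (List.ofFn v)) (q (List.ofFn v)) else 0) := by
      intro v
      set w := List.ofFn v with hw
      by_cases hv : eos ∉ w
      · rw [if_pos hv, if_pos hv]
        have hQnn : 0 ≤ QQ w := prefProb_nonneg eos (fun _ _ => hq _) w
        calc (∑ c : Ω, if eos ∉ w ++ [c] then |PP (w ++ [c]) - QQ (w ++ [c])| else 0)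
            ≤ ∑ c : Ω, (|PP w - QQ w| * p w c + QQ w * |p w c - q w c|) := by
              refine Finset.sum_le_sum fun c _ => ?_
              have hterm : 0 ≤ |PP w - QQ w| * p w c + QQ w * |p w c - q w c| := by
                have := (hp w).1 c
                positivity
              by_cases hc : eos ∉ w ++ [c]
              · rw [if_pos hc, hPP, hQQ, prefProb_append, prefProb_append, ← hPP, ← hQQ]
                calc |PP w * p w c - QQ w * q w c|
                    = |(PP w - QQ w) * p w c + QQ w * (p w c - q w c)| := by ring_nf
                  _ ≤ |(PP w - QQ w) * p w c| + |QQ w * (p w c - q w c)| := abs_add_le _ _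
                  _ = |PP w - QQ w| * p w c + QQ w * |p w c - q w c| := by
                      rw [abs_mul, abs_mul, abs_of_nonneg ((hp w).1 c), abs_of_nonneg hQnn]
              · rw [if_neg hc]; exact hterm
          _ = |PP w - QQ w| + 2 * (QQ w * tvd (p w) (q w)) := by
              rw [Finset.sum_add_distrib, ← Finset.mul_sum, ← Finset.mul_sum, (hp w).2,
                sum_abs_eq_two_tvd, mul_one]
              ring
      · have hall : ∀ c : Ω, (if eos ∉ w ++ [c] then
            |PP (w ++ [c]) - QQ (w ++ [c])| else 0) = 0 := by
          intro c
          rw [if_neg]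
          intro hnc
          exact hnc (List.mem_append_left _ (not_not.1 hv))
        rw [Finset.sum_congr rfl fun c _ => hall c, if_neg hv, if_neg hv]
        simp
    calc (∑ v : Fin j → Ω, ∑ c : Ω, if eos ∉ List.ofFn v ++ [c] then
            |PP (List.ofFn v ++ [c]) - QQ (List.ofFn v ++ [c])| else 0)
        ≤ ∑ v : Fin j → Ω, ((if eos ∉ List.ofFn v then |PP (List.ofFn v) - QQ (List.ofFn v)| else 0)
            + 2 * (if eos ∉ List.ofFn v then
                QQ (List.ofFn v) * tvd (p (List.ofFn v)) (q (List.ofFn v)) else 0)) :=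
          Finset.sum_le_sum fun v _ => key v
      _ = (∑ v : Fin j → Ω, if eos ∉ List.ofFn v then |PP (List.ofFn v) - QQ (List.ofFn v)| else 0)
            + 2 * ∑ v : Fin j → Ω, (if eos ∉ List.ofFn v then
                QQ (List.ofFn v) * tvd (p (List.ofFn v)) (q (List.ofFn v)) else 0) := by
          rw [Finset.sum_add_distrib, Finset.mul_sum]
      _ ≤ (2 * ∑ k ∈ Finset.Icc 1 j, ∑ u : Fin (k-1) → Ω, if eos ∉ List.ofFn u then
              QQ (List.ofFn u) * tvd (p (List.ofFn u)) (q (List.ofFn u)) else 0)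
            + 2 * ∑ v : Fin j → Ω, (if eos ∉ List.ofFn v then
                QQ (List.ofFn v) * tvd (p (List.ofFn v)) (q (List.ofFn v)) else 0) := by
          exact add_le_add_left ih _
      _ = 2 * ∑ k ∈ Finset.Icc 1 (j+1), ∑ u : Fin (k-1) → Ω, if eos ∉ List.ofFn u then
              QQ (List.ofFn u) * tvd (p (List.ofFn u)) (q (List.ofFn u)) else 0 := by
          rw [Finset.sum_Icc_succ_top (by omega), mul_add]
          rfl
end Aux
set_option maxHeartbeats 2000000 in
/-- **DistillSpec, Lemma 4.** For `1 ≤ t ≤ T`,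
`A_t(x) ≤ 2 Σ_{k=1}^{t−1} E_k(x) + E_t(x)`. -/
theorem Aterm_le_Eterm_sum
    {Ω ι : Type*} [Fintype Ω] [DecidableEq Ω] (eos : Ω)
    (T : ℕ) (hT : 1 ≤ T)
    (p q : ι → List Ω → Ω → ℝ) (hp : IsModel p) (hq : IsModel q)
    (x : ι) (t : ℕ) (ht1 : 1 ≤ t) (ht2 : t ≤ T) :
    Aterm eos p q x T t ≤
      2 * (∑ k ∈ Finset.Icc 1 (t - 1), Eterm eos p q x T k) + Eterm eos p q x T t := by
  classical
  have hA : ∀ (r : ι → List Ω → Ω → ℝ), IsModel r → ∀ k : ℕ, 1 ≤ k → k ≤ T →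
      modelExp eos r x T (stepLoss p q x k)
        = ∑ u : Fin (k-1) → Ω, if eos ∉ List.ofFn u then
            prefProb eos (fun _ => r x) (List.ofFn u) *
              tvd (p x (List.ofFn u)) (q x (List.ofFn u)) else 0 := by
    intro r hr k hk1 hk2
    have hfun : stepLoss p q x k
        = fun y => if k ≤ y.length then
            (fun w => tvd (p x w) (q x w)) (y.take (k-1)) else 0 := rfl
    unfold modelExp
    rw [hfun]
    exact seqExp_stepLoss (fun s pre => hr x pre) hT (fun w => tvd (p x w) (q x w)) hk1 hk2
  have hEsum : (∑ k ∈ Finset.Icc 1 (t - 1), Eterm eos p q x T k)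
      = ∑ k ∈ Finset.Icc 1 (t - 1), ∑ u : Fin (k-1) → Ω, if eos ∉ List.ofFn u then
          prefProb eos (fun _ => q x) (List.ofFn u) *
            tvd (p x (List.ofFn u)) (q x (List.ofFn u)) else 0 := by
    refine Finset.sum_congr rfl fun k hk => ?_
    rw [Finset.mem_Icc] at hk
    exact hA q hq k hk.1 (by omega)
  rw [show Aterm eos p q x T t = modelExp eos p x T (stepLoss p q x t) from rfl,
    hA p hp t ht1 ht2,
    show Eterm eos p q x T t = modelExp eos q x T (stepLoss p q x t) from rfl,
    hA q hq t ht1 ht2, hEsum]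
  set PP : List Ω → ℝ := prefProb eos (fun _ => p x) with hPP
  set QQ : List Ω → ℝ := prefProb eos (fun _ => q x) with hQQ
  have htel := telescope eos (p x) (q x) (hp x) (hq x) (t-1)
  rw [← hPP, ← hQQ] at htel
  have hpoint : (∑ u : Fin (t-1) → Ω, if eos ∉ List.ofFn u then
        PP (List.ofFn u) * tvd (p x (List.ofFn u)) (q x (List.ofFn u)) else 0)
      ≤ (∑ u : Fin (t-1) → Ω, if eos ∉ List.ofFn u then
          QQ (List.ofFn u) * tvd (p x (List.ofFn u)) (q x (List.ofFn u)) else 0)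
        + ∑ u : Fin (t-1) → Ω, if eos ∉ List.ofFn u then
            |PP (List.ofFn u) - QQ (List.ofFn u)| else 0 := by
    rw [← Finset.sum_add_distrib]
    refine Finset.sum_le_sum fun u _ => ?_
    by_cases hu : eos ∉ List.ofFn u
    · rw [if_pos hu, if_pos hu, if_pos hu]
      have hF1 : tvd (p x (List.ofFn u)) (q x (List.ofFn u)) ≤ 1 :=
        tvd_le_one (hp x _) (hq x _)
      have hF0 : 0 ≤ tvd (p x (List.ofFn u)) (q x (List.ofFn u)) := tvd_nonneg _ _
      have habs : PP (List.ofFn u) - QQ (List.ofFn u)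
          ≤ |PP (List.ofFn u) - QQ (List.ofFn u)| := le_abs_self _
      linarith [mul_le_mul_of_nonneg_right habs hF0,
        mul_le_of_le_one_right (abs_nonneg (PP (List.ofFn u) - QQ (List.ofFn u))) hF1]
    · rw [if_neg hu, if_neg hu, if_neg hu]
      norm_num
  linarith [htel, hpoint]
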